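/- Every finitely generated Π-graded group is residually finite: if G is finitely generated, Π = (p_1, p_2, …) is a sequence of primes, and ⋂_{i=1}^∞ δ_i^Π(G) = {1}, then for every g ∈ G with g ≠ 1 there is a normal subgroup N of G of finite index with g ∉ N. -/

import Mathlib

/-- The derived `Π`-series of a group, where `p i` denotes the prime `p_{i+1}` of the
sequence `Π = (p_1, p_2, …)`:  `δ_0^Π(G) = G` and
`δ_{i+1}^Π(G) = [δ_i^Π(G), δ_i^Π(G)] · (δ_i^Π(G))^{p_{i+1}}`, the subgroup generated by
all commutators and all `p_{i+1}`-th powers of elements of `δ_i^Π(G)`. -/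
def piDelta {G : Type*} [Group G] (p : ℕ → ℕ) : ℕ → Subgroup G
  | 0 => ⊤
  | i + 1 =>
      ⁅(piDelta p i : Subgroup G), (piDelta p i : Subgroup G)⁆ ⊔
        Subgroup.closure {x : G | ∃ a ∈ (piDelta p i : Subgroup G), a ^ p i = x}

lemma piDelta_succ_le {G : Type*} [Group G] (p : ℕ → ℕ) (i : ℕ) :
    (piDelta p (i + 1) : Subgroup G) ≤ piDelta p i := by
  show ⁅(piDelta p i : Subgroup G), (piDelta p i : Subgroup G)⁆ ⊔
      Subgroup.closure {x : G | ∃ a ∈ (piDelta p i : Subgroup G), a ^ p i = x} ≤ piDelta p i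
  apply sup_le
  · rw [Subgroup.commutator_le]
    intro g₁ h₁ g₂ h₂
    rw [commutatorElement_def]
    exact mul_mem (mul_mem (mul_mem h₁ h₂) (inv_mem h₁)) (inv_mem h₂)
  · rw [Subgroup.closure_le]
    rintro x ⟨a, ha, rfl⟩
    exact pow_mem ha _

lemma piDelta_normal {G : Type*} [Group G] (p : ℕ → ℕ) (i : ℕ) :
    (piDelta p i : Subgroup G).Normal := by
  induction i with
  | zero => exact inferInstanceAs (⊤ : Subgroup G).Normal
  | succ i ih =>
    haveI := ih
    show (⁅(piDelta p i : Subgroup G), (piDelta p i : Subgroup G)⁆ ⊔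
        Subgroup.closure {x : G | ∃ a ∈ (piDelta p i : Subgroup G), a ^ p i = x}).Normal
    haveI : (Subgroup.closure
        {x : G | ∃ a ∈ (piDelta p i : Subgroup G), a ^ p i = x}).Normal := by
      constructor
      intro n hn g
      induction hn using Subgroup.closure_induction with
      | mem x hx =>
        apply Subgroup.subset_closure
        obtain ⟨a, ha, rfl⟩ := hx
        exact ⟨g * a * g⁻¹, ih.conj_mem a ha g, by rw [conj_pow]⟩
      | one => simpa using (Subgroup.closure _).one_mem
      | mul x y _ _ hx hy =>
        have : g * (x * y) * g⁻¹ = (g * x * g⁻¹) * (g * y * g⁻¹) := by group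
        rw [this]; exact mul_mem hx hy
      | inv x _ hx =>
        have : g * x⁻¹ * g⁻¹ = (g * x * g⁻¹)⁻¹ := by group
        rw [this]; exact inv_mem hx
    infer_instance

open scoped commutatorElement

lemma piDelta_finiteIndex {G : Type*} [Group G] (hFG : Group.FG G) (p : ℕ → ℕ)
    (hp : ∀ i, (p i).Prime) (i : ℕ) : (piDelta p i : Subgroup G).FiniteIndex := by
  induction i with
  | zero =>
    refine ⟨?_⟩
    show (⊤ : Subgroup G).index ≠ 0
    simp [Subgroup.index_top]
  | succ i ih =>
    set H : Subgroup G := piDelta p i with hH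
    haveI := ih
    haveI : Group.FG H := Subgroup.fg_of_index_ne_zero H
    set K : Subgroup H := (piDelta p (i + 1)).subgroupOf H with hK
    haveI : K.Normal := (piDelta_normal p (i + 1)).subgroupOf H
    have hpow : ∀ a : H, (a : G) ^ p i ∈ piDelta p (i + 1) := by
      intro a
      exact Subgroup.mem_sup_right (Subgroup.subset_closure ⟨a, a.2, rfl⟩)
    have hcomm : ∀ a b : G, a ∈ H → b ∈ H → ⁅a, b⁆ ∈ piDelta p (i + 1) := by
      intro a b ha hb
      exact Subgroup.mem_sup_left (Subgroup.commutator_mem_commutator ha hb)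
    letI : CommGroup (H ⧸ K) :=
      { (inferInstance : Group (H ⧸ K)) with
        mul_comm := by
          intro x y
          obtain ⟨a, rfl⟩ := QuotientGroup.mk_surjective x
          obtain ⟨b, rfl⟩ := QuotientGroup.mk_surjective y
          show QuotientGroup.mk (a * b) = QuotientGroup.mk (b * a)
          rw [QuotientGroup.eq]
          have h1 : (((a * b)⁻¹ * (b * a) : H) : G) = ⁅(b : G)⁻¹, (a : G)⁻¹⁆ := by
            push_cast; group
          rw [Subgroup.mem_subgroupOf, h1]
          exact hcomm _ _ (inv_mem b.2) (inv_mem a.2) }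
    have tor : Monoid.IsTorsion (H ⧸ K) := by
      intro x
      obtain ⟨a, rfl⟩ := QuotientGroup.mk_surjective x
      refine isOfFinOrder_iff_pow_eq_one.mpr ⟨p i, (hp i).pos, ?_⟩
      rw [← QuotientGroup.mk_pow, QuotientGroup.eq_one_iff, Subgroup.mem_subgroupOf]
      push_cast
      exact hpow a
    haveI : Group.FG (H ⧸ K) := Group.fg_of_surjective (QuotientGroup.mk'_surjective K)
    haveI : Finite (H ⧸ K) := CommGroup.finite_of_fg_torsion _ tor
    have hKindex : K.index ≠ 0 := Subgroup.index_ne_zero_of_finite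
    refine ⟨?_⟩
    rw [← Subgroup.relIndex_mul_index (piDelta_succ_le p i)]
    exact mul_ne_zero hKindex ih.1

/-- Every finitely generated `Π`-graded group is residually finite. -/
theorem residuallyFinite_of_fg_piGraded
    {G : Type*} [Group G] (hFG : Group.FG G) (p : ℕ → ℕ) (hp : ∀ i, (p i).Prime)
    (hgraded : (⨅ i : ℕ, (piDelta p (i + 1) : Subgroup G)) = ⊥) :
    ∀ g : G, g ≠ 1 → ∃ N : Subgroup G, N.Normal ∧ N.FiniteIndex ∧ g ∉ N := by
  intro g hg
  have : g ∉ (⨅ i : ℕ, (piDelta p (i + 1) : Subgroup G)) := by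
    rw [hgraded]; simpa using hg
  rw [Subgroup.mem_iInf] at this
  push_neg at this
  obtain ⟨i, hi⟩ := this
  exact ⟨piDelta p (i + 1), piDelta_normal p (i + 1),
    piDelta_finiteIndex hFG p hp (i + 1), hi⟩
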